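/- Let t ∈ ℕ be odd. Any spherical t-design X_N ⊂ S¹ on the circle satisfies N ≥ t + 1. -/

import Mathlib

open Real MeasureTheory

open Metric Pointwise

noncomputable abbrev E2 : Type := EuclideanSpace ℝ (Fin 2)

/-- restriction of a linear isometry equiv to the unit sphere -/
noncomputable def sphereRot (e : E2 ≃ₗᵢ[ℝ] E2) : sphere (0:E2) 1 → sphere (0:E2) 1 :=
  fun y => ⟨e y, by
    have : ‖e (y:E2)‖ = ‖(y:E2)‖ := e.norm_map _
    have hy : ‖(y:E2)‖ = 1 := by simpa [mem_sphere_zero_iff_norm] using y.2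
    simp [mem_sphere_zero_iff_norm, this, hy]⟩

lemma sphereRot_cont (e : E2 ≃ₗᵢ[ℝ] E2) : Continuous (sphereRot e) :=
  Continuous.subtype_mk (e.continuous.comp continuous_subtype_val) _

noncomputable def sphereRotHomeo (e : E2 ≃ₗᵢ[ℝ] E2) : Homeomorph (sphere (0:E2) 1) (sphere (0:E2) 1) where
  toFun := sphereRot e
  invFun := sphereRot e.symm
  left_inv := fun y => Subtype.ext (e.symm_apply_apply y)
  right_inv := fun y => Subtype.ext (e.apply_symm_apply y)
  continuous_toFun := sphereRot_cont e
  continuous_invFun := sphereRot_cont e.symm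

lemma coe_image_preimage (e : E2 ≃ₗᵢ[ℝ] E2) (s : Set (sphere (0:E2) 1)) :
    Subtype.val '' (sphereRot e ⁻¹' s) = ⇑e ⁻¹' (Subtype.val '' s) := by
  ext v
  constructor
  · rintro ⟨y, hy, rfl⟩
    exact ⟨sphereRot e y, hy, rfl⟩
  · rintro ⟨w, hw, hwv⟩
    have hv : v ∈ sphere (0:E2) 1 := by
      have hw1 : ‖(w:E2)‖ = 1 := by simpa [mem_sphere_zero_iff_norm] using w.2
      have : ‖e v‖ = 1 := by rw [hwv] at hw1; exact hw1
      rw [e.norm_map] at this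
      simpa [mem_sphere_zero_iff_norm] using this
    refine ⟨⟨v, hv⟩, ?_, rfl⟩
    show sphereRot e ⟨v, hv⟩ ∈ s
    have : sphereRot e ⟨v, hv⟩ = w := Subtype.ext hwv.symm
    rw [this]; exact hw

lemma smul_preimage (e : E2 ≃ₗᵢ[ℝ] E2) (A : Set E2) :
    Set.Ioo (0:ℝ) 1 • (⇑e ⁻¹' A) = ⇑e ⁻¹' (Set.Ioo (0:ℝ) 1 • A) := by
  ext v
  simp only [Set.mem_smul, Set.mem_preimage]
  constructor
  · rintro ⟨r, hr, b, hb, rfl⟩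
    exact ⟨r, hr, e b, hb, (e.map_smul r b).symm⟩
  · rintro ⟨r, hr, a, ha, hra⟩
    refine ⟨r, hr, e.symm a, by simpa using ha, ?_⟩
    apply e.injective
    rw [e.map_smul, e.apply_symm_apply, hra]

lemma toSphere_map (e : E2 ≃ₗᵢ[ℝ] E2) :
    Measure.map (sphereRot e) (volume : Measure E2).toSphere = (volume : Measure E2).toSphere := by
  have hme : MeasurableEmbedding (⇑e) := e.toHomeomorph.measurableEmbedding
  ext s hs
  rw [Measure.map_apply (sphereRot_cont e).measurable hs]
  have hps : MeasurableSet (sphereRot e ⁻¹' s) := (sphereRot_cont e).measurable hs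
  rw [Measure.toSphere_apply' _ hps, Measure.toSphere_apply' _ hs,
    coe_image_preimage, smul_preimage]
  congr 1
  exact e.measurePreserving.measure_preimage_emb hme _

lemma integral_sphereRot_comp (e : E2 ≃ₗᵢ[ℝ] E2) (g : sphere (0:E2) 1 → ℂ) :
    ∫ y, g (sphereRot e y) ∂(volume : Measure E2).toSphere
      = ∫ y, g y ∂(volume : Measure E2).toSphere := by
  have h : MeasurePreserving (sphereRot e) (volume : Measure E2).toSphere
      (volume : Measure E2).toSphere := ⟨(sphereRot_cont e).measurable, toSphere_map e⟩
  exact h.integral_comp (sphereRotHomeo e).measurableEmbedding g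

lemma toSphere_univ_two :
    (volume : Measure E2).toSphere Set.univ = ENNReal.ofReal (2 * π) := by
  rw [Measure.toSphere_apply_univ]
  rw [EuclideanSpace.volume_ball]
  have h1 : ((Fintype.card (Fin 2) : ℝ) / 2 + 1) = 2 := by norm_num
  have h2 : (Real.sqrt π ^ Fintype.card (Fin 2) / Real.Gamma ((Fintype.card (Fin 2) : ℝ) / 2 + 1)) = π := by
    rw [h1, Real.Gamma_two]
    simp [Real.sq_sqrt Real.pi_nonneg]
  rw [h2]
  rw [ENNReal.ofReal_mul (by norm_num)]
  simp [finrank_euclideanSpace]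

noncomputable def cE (v : E2) : ℂ := (v 0 : ℝ) + (v 1 : ℝ) * Complex.I

lemma cE_repr (z : ℂ) : cE (Complex.orthonormalBasisOneI.repr z) = z := by
  simp [cE, Complex.orthonormalBasisOneI_repr_apply]

lemma repr_symm_eq (v : E2) : Complex.orthonormalBasisOneI.repr.symm v = cE v := by
  apply Complex.orthonormalBasisOneI.repr.injective
  rw [LinearIsometryEquiv.apply_symm_apply]
  ext j
  fin_cases j <;> simp [cE, Complex.orthonormalBasisOneI_repr_apply]

noncomputable def rotE (α : ℝ) : E2 ≃ₗᵢ[ℝ] E2 :=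
  Complex.orthonormalBasisOneI.repr.symm.trans
    ((rotation (Circle.exp α)).trans Complex.orthonormalBasisOneI.repr)

lemma cE_rotE (α : ℝ) (v : E2) : cE (rotE α v) = (Circle.exp α : ℂ) * cE v := by
  rw [rotE, LinearIsometryEquiv.trans_apply, LinearIsometryEquiv.trans_apply, cE_repr,
    rotation_apply, repr_symm_eq]

lemma continuous_cE : Continuous cE := by
  have h0 : Continuous fun v : E2 => v 0 := by
    exact (continuous_apply (0 : Fin 2)).comp (PiLp.continuous_ofLp 2 _)
  have h1 : Continuous fun v : E2 => v 1 := by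
    exact (continuous_apply (1 : Fin 2)).comp (PiLp.continuous_ofLp 2 _)
  unfold cE
  fun_prop

noncomputable def Fc (y : sphere (0:E2) 1) : ℂ := cE (y : E2)

lemma integrable_Fc_pow (k : ℕ) :
    Integrable (fun y => (Fc y)^k) ((volume : Measure E2).toSphere) := by
  have hc : Continuous fun y : sphere (0:E2) 1 => (Fc y)^k :=
    (continuous_cE.comp continuous_subtype_val).pow k
  exact hc.integrable_of_hasCompactSupport (HasCompactSupport.of_compactSpace _)

lemma integral_Fc_pow (k : ℕ) (hk : k ≠ 0) :
    ∫ y, (Fc y)^k ∂((volume : Measure E2).toSphere) = 0 := by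
  set ν := (volume : Measure E2).toSphere
  have hrot := integral_sphereRot_comp (rotE (π / k)) (fun y => (Fc y)^k)
  have hu : ((Circle.exp (π / k) : ℂ))^k = -1 := by
    rw [Circle.coe_exp, ← Complex.exp_nat_mul]
    have : (k : ℂ) * (↑(π / k) * Complex.I) = ↑π * Complex.I := by
      have hk' : (k : ℂ) ≠ 0 := Nat.cast_ne_zero.mpr hk
      push_cast
      field_simp
    rw [this, Complex.exp_pi_mul_I]
  have hF : ∀ y, Fc (sphereRot (rotE (π / k)) y) = (Circle.exp (π / k) : ℂ) * Fc y := by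
    intro y
    simp only [Fc, sphereRot, cE_rotE]
  have : ∫ y, (Fc y)^k ∂ν = (-1 : ℂ) * ∫ y, (Fc y)^k ∂ν := by
    calc ∫ y, (Fc y)^k ∂ν = ∫ y, (Fc (sphereRot (rotE (π / k)) y))^k ∂ν := hrot.symm
    _ = ∫ y, ((Circle.exp (π / k) : ℂ))^k * (Fc y)^k ∂ν := by
        congr 1; funext y; rw [hF y, mul_pow]
    _ = (-1 : ℂ) * ∫ y, (Fc y)^k ∂ν := by rw [hu, integral_const_mul]
  linear_combination this / 2

lemma integral_Fc_pow_re (k : ℕ) (hk : k ≠ 0) :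
    ∫ y, ((Fc y)^k).re ∂((volume : Measure E2).toSphere) = 0 := by
  have h := integral_re (integrable_Fc_pow k)
  rw [integral_Fc_pow k hk] at h
  simpa using h

lemma integral_Fc_pow_im (k : ℕ) (hk : k ≠ 0) :
    ∫ y, ((Fc y)^k).im ∂((volume : Measure E2).toSphere) = 0 := by
  have h := integral_im (integrable_Fc_pow k)
  rw [integral_Fc_pow k hk] at h
  simpa using h

open MvPolynomial in
/-- apply an ℝ-linear functional coefficientwise to a complex mv-polynomial -/
noncomputable def lmapP (f : ℂ →ₗ[ℝ] ℝ) (q : MvPolynomial (Fin 2) ℂ) : MvPolynomial (Fin 2) ℝ :=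
  q.support.sum fun m => monomial m (f (q.coeff m))

open MvPolynomial in
lemma lmapP_coeff (f : ℂ →ₗ[ℝ] ℝ) (q : MvPolynomial (Fin 2) ℂ) (n : Fin 2 →₀ ℕ) :
    (lmapP f q).coeff n = f (q.coeff n) := by
  rw [lmapP, MvPolynomial.coeff_sum]
  simp only [coeff_monomial]
  by_cases hn : n ∈ q.support
  · rw [Finset.sum_eq_single n]
    · simp
    · intro b _ hb; simp [hb]
    · intro h; exact absurd hn h
  · have h0 : q.coeff n = 0 := by simpa using hn
    rw [h0, map_zero]
    apply Finset.sum_eq_zero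
    intro b hb
    have : b ≠ n := fun h => hn (h ▸ hb)
    simp [this]

open MvPolynomial in
lemma lmapP_totalDegree (f : ℂ →ₗ[ℝ] ℝ) (q : MvPolynomial (Fin 2) ℂ) :
    (lmapP f q).totalDegree ≤ q.totalDegree := by
  apply Finset.sup_mono
  intro n hn
  rw [MvPolynomial.mem_support_iff] at hn ⊢
  rw [lmapP_coeff] at hn
  intro h
  rw [h, map_zero] at hn
  exact hn rfl

open MvPolynomial in
lemma lmapP_eval (f : ℂ →ₗ[ℝ] ℝ) (q : MvPolynomial (Fin 2) ℂ) (v : Fin 2 → ℝ) :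
    eval v (lmapP f q) = f (eval (fun j => (v j : ℂ)) q) := by
  rw [lmapP]
  rw [map_sum]
  conv_rhs => rw [q.as_sum, map_sum, map_sum]
  apply Finset.sum_congr rfl
  intro m _
  rw [eval_monomial, eval_monomial]
  have : (∏ j ∈ m.support, ((v j : ℂ)) ^ m j) = ((∏ j ∈ m.support, (v j) ^ m j : ℝ) : ℂ) := by
    push_cast; rfl
  rw [Finsupp.prod, Finsupp.prod, this]
  rw [show q.coeff m * ((∏ j ∈ m.support, (v j) ^ m j : ℝ) : ℂ)
      = (∏ j ∈ m.support, (v j) ^ m j : ℝ) • q.coeff m by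
    rw [Complex.real_smul]; ring]
  rw [f.map_smul]
  simp [mul_comm]

open MvPolynomial in
noncomputable def Qp (k : ℕ) : MvPolynomial (Fin 2) ℂ := (X 0 + C Complex.I * X 1)^k

open MvPolynomial in
lemma Qp_eval (k : ℕ) (v : Fin 2 → ℝ) :
    eval (fun j => ((v j : ℝ) : ℂ)) (Qp k) = ((v 0 : ℂ) + (v 1 : ℂ) * Complex.I)^k := by
  rw [Qp, map_pow]
  congr 1
  simp [mul_comm]

open MvPolynomial in
lemma Qp_totalDegree (k : ℕ) : (Qp k).totalDegree ≤ k := by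
  rw [Qp]
  refine le_trans (totalDegree_pow _ _) ?_
  calc k * (X (0:Fin 2) + C Complex.I * X 1).totalDegree
      ≤ k * 1 := by
        apply Nat.mul_le_mul_left
        apply le_trans (totalDegree_add _ _)
        apply max_le
        · exact le_of_eq (totalDegree_X _)
        · apply le_trans (totalDegree_mul _ _)
          simp [totalDegree_X]
    _ = k := mul_one k

/-- power sums vanishing forces many points -/
lemma powersum_lemma (N t : ℕ) (hN : N ≠ 0) (hNt : N ≤ t) (z : Fin N → ℂ)
    (hz : ∀ i, ‖z i‖ = 1)
    (hsum : ∀ k, 1 ≤ k → k ≤ t → ∑ i, (z i)^k = 0) : False := by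
  classical
  set g : Polynomial ℂ := ∏ i, (Polynomial.X - Polynomial.C (z i)) with hg
  have hdeg : g.natDegree = N := by
    rw [hg, Polynomial.natDegree_prod]
    · simp
    · intro i _
      exact Polynomial.X_sub_C_ne_zero (z i)
  have heval0 : ∀ i, g.eval (z i) = 0 := by
    intro i
    rw [hg, Polynomial.eval_prod]
    exact Finset.prod_eq_zero (Finset.mem_univ i) (by simp)
  have hexp : ∀ i, g.eval (z i) = ∑ j ∈ Finset.range (N+1), g.coeff j * (z i)^j := by
    intro i
    rw [Polynomial.eval_eq_sum_range, hdeg]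
  have hc0N : g.coeff 0 * (N : ℂ) = 0 := by
    have h1 : (0 : ℂ) = ∑ i, g.eval (z i) := by simp [heval0]
    have h2 : ∑ i, g.eval (z i)
        = ∑ j ∈ Finset.range (N+1), g.coeff j * (∑ i, (z i)^j) := by
      calc ∑ i, g.eval (z i)
          = ∑ i, ∑ j ∈ Finset.range (N+1), g.coeff j * (z i)^j :=
            Finset.sum_congr rfl (fun i _ => hexp i)
        _ = ∑ j ∈ Finset.range (N+1), ∑ i, g.coeff j * (z i)^j := Finset.sum_comm
        _ = ∑ j ∈ Finset.range (N+1), g.coeff j * (∑ i, (z i)^j) := by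
            simp [Finset.mul_sum]
    rw [h2] at h1
    rw [Finset.sum_eq_single 0] at h1
    · simp only [pow_zero, Finset.sum_const, Finset.card_univ, Fintype.card_fin,
        nsmul_eq_mul, mul_one] at h1
      exact h1.symm
    · intro j hj hj0
      rw [hsum j (Nat.one_le_iff_ne_zero.mpr hj0)
        (le_trans (Nat.lt_succ_iff.mp (Finset.mem_range.mp hj)) hNt), mul_zero]
    · intro h
      exact absurd (Finset.mem_range.mpr (Nat.succ_pos N)) h
  have hc0 : g.coeff 0 ≠ 0 := by
    rw [Polynomial.coeff_zero_eq_eval_zero, hg, Polynomial.eval_prod]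
    simp only [Polynomial.eval_sub, Polynomial.eval_X, Polynomial.eval_C, zero_sub]
    intro h
    obtain ⟨i, -, hi⟩ := Finset.prod_eq_zero_iff.mp h
    rw [neg_eq_zero] at hi
    have := hz i
    rw [hi] at this
    simp at this
  have hNc : (N : ℂ) ≠ 0 := Nat.cast_ne_zero.mpr hN
  exact (mul_ne_zero hc0 hNc) hc0N

/-- `X_N ⊂ S¹` is a spherical `t`-design on the circle: the equal-weight
average of every bivariate polynomial of total degree `≤ t` over the points
equals its mean over `S¹` with respect to arc-length measure (total mass `2π`). -/
def IsCircleDesign (t : ℕ) {N : ℕ} (x : Fin N → EuclideanSpace ℝ (Fin 2)) : Prop :=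
  ∀ p : MvPolynomial (Fin 2) ℝ, p.totalDegree ≤ t →
    (1 / (N : ℝ)) * ∑ i, MvPolynomial.eval (fun j => x i j) p =
      (1 / (2 * Real.pi)) *
        ∫ y : Metric.sphere (0 : EuclideanSpace ℝ (Fin 2)) 1,
          MvPolynomial.eval (fun j => (y : EuclideanSpace ℝ (Fin 2)) j) p
          ∂((volume : Measure (EuclideanSpace ℝ (Fin 2))).toSphere)

/-- Delsarte–Goethals–Seidel lower bound on the circle for odd `t`:
any spherical `t`-design `X_N ⊂ S¹` satisfies `N ≥ t + 1`. -/
theorem circleDesign_lower_bound (t N : ℕ) (ht : Odd t)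
    (x : Fin N → EuclideanSpace ℝ (Fin 2))
    (hx : ∀ i, x i ∈ Metric.sphere (0 : EuclideanSpace ℝ (Fin 2)) 1)
    (hdesign : IsCircleDesign t x) :
    t + 1 ≤ N := by
  by_contra hcon
  push_neg at hcon
  have hNt : N ≤ t := Nat.lt_succ_iff.mp hcon
  have hmass : (((volume : Measure E2).toSphere) Set.univ).toReal = 2 * π := by
    rw [toSphere_univ_two]
    exact ENNReal.toReal_ofReal (by positivity)
  -- N ≠ 0
  have hone := hdesign 1 (by simp)
  simp only [map_one, Finset.sum_const, Finset.card_univ, Fintype.card_fin, nsmul_eq_mul,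
    mul_one, integral_const, smul_eq_mul] at hone
  rw [measureReal_def, hmass] at hone
  have hpi : (2 * π) ≠ 0 := by positivity
  rw [one_div (2*π), inv_mul_cancel₀ hpi] at hone
  have hN : N ≠ 0 := by
    intro h
    subst h
    norm_num at hone
  -- complex points
  set z : Fin N → ℂ := fun i => (x i 0 : ℂ) + (x i 1 : ℂ) * Complex.I with hzdef
  have hz : ∀ i, ‖z i‖ = 1 := by
    intro i
    have hxi : ‖x i‖ = 1 := by simpa [mem_sphere_zero_iff_norm] using hx i
    rw [EuclideanSpace.norm_eq, Fin.sum_univ_two] at hxi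
    rw [hzdef]
    simp only [Complex.norm_def, Complex.normSq_add_mul_I]
    simpa [Real.norm_eq_abs, sq_abs] using hxi
  have hpow : ∀ k, 1 ≤ k → k ≤ t → ∑ i, (z i)^k = 0 := by
    intro k hk1 hkt
    have hkne : k ≠ 0 := Nat.one_le_iff_ne_zero.mp hk1
    have hdle : ∀ f : ℂ →ₗ[ℝ] ℝ, (lmapP f (Qp k)).totalDegree ≤ t :=
      fun f => le_trans (lmapP_totalDegree _ _) (le_trans (Qp_totalDegree k) hkt)
    have h1N : (1 : ℝ) / (N : ℝ) ≠ 0 := one_div_ne_zero (Nat.cast_ne_zero.mpr hN)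
    -- real part
    have hre := hdesign (lmapP Complex.reLm (Qp k)) (hdle _)
    have hLre : ∑ i, MvPolynomial.eval (fun j => x i j) (lmapP Complex.reLm (Qp k))
        = ∑ i, ((z i)^k).re := by
      refine Finset.sum_congr rfl fun i _ => ?_
      rw [lmapP_eval, Qp_eval]
      simp [hzdef]
    have hfre : (fun y : Metric.sphere (0:E2) 1 =>
        MvPolynomial.eval (fun j => (y : EuclideanSpace ℝ (Fin 2)) j) (lmapP Complex.reLm (Qp k)))
        = fun y => ((Fc y)^k).re := by
      funext y
      rw [lmapP_eval, Qp_eval]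
      simp [Fc, cE]
    rw [hLre, hfre, integral_Fc_pow_re k hkne, mul_zero] at hre
    have hSre : ∑ i, ((z i)^k).re = 0 := by
      rcases mul_eq_zero.mp hre with h' | h'
      · exact absurd h' h1N
      · exact h'
    -- imaginary part
    have him := hdesign (lmapP Complex.imLm (Qp k)) (hdle _)
    have hLim : ∑ i, MvPolynomial.eval (fun j => x i j) (lmapP Complex.imLm (Qp k))
        = ∑ i, ((z i)^k).im := by
      refine Finset.sum_congr rfl fun i _ => ?_
      rw [lmapP_eval, Qp_eval]
      simp [hzdef]
    have hfim : (fun y : Metric.sphere (0:E2) 1 =>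
        MvPolynomial.eval (fun j => (y : EuclideanSpace ℝ (Fin 2)) j) (lmapP Complex.imLm (Qp k)))
        = fun y => ((Fc y)^k).im := by
      funext y
      rw [lmapP_eval, Qp_eval]
      simp [Fc, cE]
    rw [hLim, hfim, integral_Fc_pow_im k hkne, mul_zero] at him
    have hSim : ∑ i, ((z i)^k).im = 0 := by
      rcases mul_eq_zero.mp him with h' | h'
      · exact absurd h' h1N
      · exact h'
    apply Complex.ext <;> simp [Complex.re_sum, Complex.im_sum, hSre, hSim]
  exact powersum_lemma N t hN hNt z hz hpow
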